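/- arXiv:2102.07722 — 6 statements merged into one kernel-verified Lean document; each statement's English description precedes it below -/
import Mathlib

section
/- Let a = (a_n) be a sequence of nonnegative real numbers with a_n = O(n^d) for some natural number d. There exists a real number β > 1 such that ∑_{n≥0} a_n / β^{n+1} = 1 if and only if ∑_{n≥0} a_n > 1 (where the sum may be +∞). Moreover, in that case β is unique. -/
open Filter Topology

/-- Product of the first `n+1` terms of the base sequence. -/
noncomputable def cprod (β : ℕ → ℝ) (n : ℕ) : ℝ := ∏ i ∈ Finset.range (n+1), β i

/-- A Cantor real base: all terms exceed 1 and the partial products tend to infinity. -/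
def IsCantorBase (β : ℕ → ℝ) : Prop :=
  (∀ n, 1 < β n) ∧ Tendsto (cprod β) atTop atTop

/-- Value of a real-digit sequence in a Cantor base. -/
noncomputable def valB (β : ℕ → ℝ) (a : ℕ → ℝ) : ℝ := ∑' n, a n / cprod β n

/-- Value of a natural-digit sequence in a Cantor base. -/
noncomputable def valN (β : ℕ → ℝ) (a : ℕ → ℕ) : ℝ := valB β (fun n => (a n : ℝ))

/-- Remainders of the greedy algorithm. -/
noncomputable def greedyRem (β : ℕ → ℝ) (x : ℝ) : ℕ → ℝ
  | 0 => β 0 * x - ⌊β 0 * x⌋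
  | n+1 => β (n+1) * greedyRem β x n - ⌊β (n+1) * greedyRem β x n⌋

/-- Digits of the greedy expansion. -/
noncomputable def greedy (β : ℕ → ℝ) (x : ℝ) : ℕ → ℕ
  | 0 => (⌊β 0 * x⌋).toNat
  | n+1 => (⌊β (n+1) * greedyRem β x n⌋).toNat

/-- Remainders of the quasi-greedy algorithm started at `1`:
at each step the largest digit keeping the remainder strictly positive is chosen. -/
noncomputable def qRem (β : ℕ → ℝ) : ℕ → ℝ
  | 0 => β 0 - (⌈β 0⌉ - 1)
  | n+1 => β (n+1) * qRem β n - (⌈β (n+1) * qRem β n⌉ - 1)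

/-- Digits of the quasi-greedy expansion of `1`. -/
noncomputable def quasiGreedy (β : ℕ → ℝ) : ℕ → ℕ
  | 0 => (⌈β 0⌉ - 1).toNat
  | n+1 => (⌈β (n+1) * qRem β n⌉ - 1).toNat

/-- The `n`-shifted base `β^{(n)}`. -/
def shiftBase (β : ℕ → ℝ) (n : ℕ) : ℕ → ℝ := fun k => β (n + k)

/-- The `n`-fold shift `σ^n` of a digit sequence. -/
def shiftSeq (a : ℕ → ℕ) (n : ℕ) : ℕ → ℕ := fun k => a (n + k)

/-- Strict lexicographic order on digit sequences. -/
def LexLt (a b : ℕ → ℕ) : Prop := ∃ ℓ, (∀ k, k < ℓ → a k = b k) ∧ a ℓ < b ℓ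

/-- Lexicographic order on digit sequences. -/
def LexLe (a b : ℕ → ℕ) : Prop := LexLt a b ∨ a = b

/-- The set of greedy expansions of points of `[0,1)`. -/
def Dset (β : ℕ → ℝ) : Set (ℕ → ℕ) := {a | ∃ x ∈ Set.Ico (0:ℝ) 1, a = greedy β x}

theorem stmt_0 (a : ℕ → ℝ) (ha : ∀ n, 0 ≤ a n) (d : ℕ)
    (hO : a =O[atTop] (fun n : ℕ => (n : ℝ) ^ d)) :
    ((∃ β : ℝ, 1 < β ∧ ∑' n : ℕ, a n / β ^ (n + 1) = 1) ↔
      1 < ∑' n : ℕ, ENNReal.ofReal (a n)) ∧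
    (∀ β γ : ℝ, 1 < β → (∑' n : ℕ, a n / β ^ (n + 1)) = 1 →
      1 < γ → (∑' n : ℕ, a n / γ ^ (n + 1)) = 1 → β = γ) := by
  -- Summability for any base > 1
  have hsumm : ∀ {β : ℝ}, 1 < β → Summable (fun n : ℕ => a n / β ^ (n + 1)) := by
    intro β hβ
    have hβ0 : 0 < β := lt_trans one_pos hβ
    have hr : ‖β⁻¹‖ < 1 := by
      rw [norm_inv, Real.norm_eq_abs, abs_of_pos hβ0]
      exact inv_lt_one_of_one_lt₀ hβ
    have hs : Summable (fun n : ℕ => (n : ℝ) ^ d * β⁻¹ ^ n * β⁻¹) :=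
      (summable_pow_mul_geometric_of_norm_lt_one d hr).mul_right β⁻¹
    apply summable_of_isBigO_nat hs
    have := hO.mul (Asymptotics.isBigO_refl (fun n : ℕ => β⁻¹ ^ n * β⁻¹) atTop)
    calc (fun n : ℕ => a n / β ^ (n + 1))
        = fun n : ℕ => a n * (β⁻¹ ^ n * β⁻¹) := by
          funext n
          rw [div_eq_mul_inv, ← inv_pow, pow_succ]
      _ =O[atTop] fun n : ℕ => (n : ℝ) ^ d * β⁻¹ ^ n * β⁻¹ := by
          simpa [mul_assoc] using this
  -- Core: strict monotonicity contradiction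
  have key : ∀ β γ : ℝ, 1 < β → β < γ → (∑' n : ℕ, a n / β ^ (n + 1)) = 1 →
      (∑' n : ℕ, a n / γ ^ (n + 1)) = 1 → False := by
    intro β γ hβ hβγ hβ1 hγ1
    have hβ0 : (0:ℝ) < β := lt_trans one_pos hβ
    obtain ⟨n0, hn0⟩ : ∃ n, 0 < a n := by
      by_contra h
      push_neg at h
      have hz : ∀ n, a n = 0 := fun n => le_antisymm (h n) (ha n)
      simp [hz] at hβ1
    have hlt : (∑' n : ℕ, a n / γ ^ (n + 1)) < ∑' n : ℕ, a n / β ^ (n + 1) := by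
      refine Summable.tsum_lt_tsum_of_nonneg (i := n0) ?_ ?_ ?_ (hsumm hβ)
      · intro n; exact div_nonneg (ha n) (pow_pos (lt_trans hβ0 hβγ) _).le
      · intro n
        gcongr <;> first | exact ha n | exact hβ0.le | exact hβγ.le | positivity
      · have hp : β ^ (n0 + 1) < γ ^ (n0 + 1) :=
          pow_lt_pow_left₀ hβγ hβ0.le (Nat.succ_ne_zero _)
        exact div_lt_div_of_pos_left hn0 (pow_pos hβ0 _) hp
    rw [hβ1, hγ1] at hlt
    exact lt_irrefl _ hlt
  constructor
  · constructor
    · -- Forward: existence of β implies sum > 1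
      rintro ⟨β, hβ, hval⟩
      have hβ0 : (0:ℝ) < β := lt_trans one_pos hβ
      have hs := hsumm hβ
      have hnn : ∀ n : ℕ, 0 ≤ a n / β ^ (n + 1) :=
        fun n => div_nonneg (ha n) (pow_pos hβ0 _).le
      have hterm : ∀ n : ℕ, β * (a n / β ^ (n + 1)) ≤ a n := by
        intro n
        have h1 : β * (a n / β ^ (n + 1)) = a n / β ^ n := by
          rw [pow_succ]
          field_simp
        rw [h1]
        exact div_le_self (ha n) (one_le_pow₀ hβ.le)
      calc (1:ENNReal) < ENNReal.ofReal β := ENNReal.one_lt_ofReal.mpr hβ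
        _ = ENNReal.ofReal β * ENNReal.ofReal (∑' n : ℕ, a n / β ^ (n + 1)) := by
            rw [hval, ENNReal.ofReal_one, mul_one]
        _ = ENNReal.ofReal β * ∑' n : ℕ, ENNReal.ofReal (a n / β ^ (n + 1)) := by
            rw [ENNReal.ofReal_tsum_of_nonneg hnn hs]
        _ = ∑' n : ℕ, ENNReal.ofReal (β * (a n / β ^ (n + 1))) := by
            rw [← ENNReal.tsum_mul_left]
            exact tsum_congr fun n => (ENNReal.ofReal_mul hβ0.le).symm
        _ ≤ ∑' n : ℕ, ENNReal.ofReal (a n) :=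
            ENNReal.tsum_le_tsum fun n => ENNReal.ofReal_le_ofReal (hterm n)
    · -- Reverse: sum > 1 implies existence via IVT
      intro h
      rw [ENNReal.tsum_eq_iSup_sum, lt_iSup_iff] at h
      obtain ⟨s, hs⟩ := h
      set S := ∑ i ∈ s, a i with hSdef
      have hS : 1 < S := by
        rw [← ENNReal.ofReal_sum_of_nonneg (fun i _ => ha i)] at hs
        exact ENNReal.one_lt_ofReal.mp hs
      set N := s.sup id + 1 with hNdef
      have hmemN : ∀ i ∈ s, i + 1 ≤ N := fun i hi =>
        Nat.succ_le_succ (Finset.le_sup (f := id) hi)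
      -- find lower endpoint b with 1 < b < 2 and b^N < S
      have h1 : ∀ᶠ x in 𝓝[>] (1:ℝ), x ^ N < S := by
        have ht : Tendsto (fun x : ℝ => x ^ N) (𝓝[>] (1:ℝ)) (𝓝 1) := by
          have := ((continuous_pow N).tendsto (1:ℝ)).mono_left
            (nhdsWithin_le_nhds (s := Set.Ioi (1:ℝ)))
          simpa using this
        exact ht.eventually_lt_const hS
      have h2 : ∀ᶠ x in 𝓝[>] (1:ℝ), x ∈ Set.Ioo (1:ℝ) 2 :=
        Ioo_mem_nhdsGT_of_mem ⟨le_refl 1, one_lt_two⟩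
      obtain ⟨b, hbS, hb1, hb2⟩ := (h1.and h2).exists
      have hb0 : (0:ℝ) < b := lt_trans one_pos hb1
      -- F b > 1
      have hFb : 1 < ∑' n : ℕ, a n / b ^ (n + 1) := by
        have step2 : (∑ i ∈ s, a i / b ^ N) ≤ ∑ i ∈ s, a i / b ^ (i + 1) := by
          apply Finset.sum_le_sum
          intro i hi
          gcongr <;> first | exact ha i | exact hb1.le | exact hmemN i hi | positivity
        have step3 : (∑ i ∈ s, a i / b ^ (i + 1)) ≤ ∑' n : ℕ, a n / b ^ (n + 1) :=
          Summable.sum_le_tsum s (fun i _ => div_nonneg (ha i) (pow_pos hb0 _).le) (hsumm hb1)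
        have hlow : S / b ^ N ≤ ∑' n : ℕ, a n / b ^ (n + 1) := by
          calc S / b ^ N = ∑ i ∈ s, a i / b ^ N := Finset.sum_div s a (b ^ N)
            _ ≤ ∑ i ∈ s, a i / b ^ (i + 1) := step2
            _ ≤ _ := step3
        have : 1 < S / b ^ N := (one_lt_div (pow_pos hb0 N)).mpr hbS
        linarith
      -- upper endpoint B
      set C := ∑' n : ℕ, a n / 2 ^ (n + 1) with hCdef
      have hC0 : 0 ≤ C := tsum_nonneg fun n => div_nonneg (ha n) (by positivity)
      set B := 2 * C + 2 with hBdef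
      have hB2 : (2:ℝ) ≤ B := by simp only [hBdef]; linarith
      have hB1 : (1:ℝ) < B := by linarith
      have hB0 : (0:ℝ) < B := by linarith
      have hFB : (∑' n : ℕ, a n / B ^ (n + 1)) < 1 := by
        have hterm : ∀ n : ℕ, a n / B ^ (n + 1) ≤ 2 / B * (a n / 2 ^ (n + 1)) := by
          intro n
          rw [div_mul_div_comm, div_le_div_iff₀ (by positivity) (by positivity)]
          have h2B : (2:ℝ) ^ n ≤ B ^ n := pow_le_pow_left₀ (by norm_num) hB2 n
          have key2 : a n * 2 ^ n ≤ a n * B ^ n := mul_le_mul_of_nonneg_left h2B (ha n)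
          have e1 : a n * (B * 2 ^ (n + 1)) = (2 * B) * (a n * 2 ^ n) := by ring
          have e2 : 2 * a n * (B ^ (n + 1)) = (2 * B) * (a n * B ^ n) := by ring
          rw [e1, e2]
          exact mul_le_mul_of_nonneg_left key2 (by linarith)
        calc (∑' n : ℕ, a n / B ^ (n + 1))
            ≤ ∑' n : ℕ, 2 / B * (a n / 2 ^ (n + 1)) :=
              Summable.tsum_le_tsum hterm (hsumm hB1) ((hsumm one_lt_two).mul_left _)
          _ = 2 / B * C := by rw [tsum_mul_left]
          _ < 1 := by
              rw [div_mul_eq_mul_div, div_lt_one hB0]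
              linarith
      have hbB : b ≤ B := by linarith [hb2]
      -- continuity of F on [b, B]
      have hcontF : ContinuousOn (fun x : ℝ => ∑' n : ℕ, a n / x ^ (n + 1))
          (Set.Icc b B) := by
        apply continuousOn_tsum (u := fun n : ℕ => a n / b ^ (n + 1))
          (f := fun (n : ℕ) (x : ℝ) => a n / x ^ (n + 1))
        · intro i
          apply ContinuousOn.div continuousOn_const (continuous_pow (i + 1)).continuousOn
          intro x hx
          exact ne_of_gt (pow_pos (lt_of_lt_of_le hb0 hx.1) _)
        · exact hsumm hb1
        · intro n x hx
          rw [Real.norm_eq_abs,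
            abs_of_nonneg (div_nonneg (ha n) (pow_pos (lt_of_lt_of_le hb0 hx.1) _).le)]
          gcongr <;> first | exact ha n | exact hb0.le | exact hx.1 | positivity
      have hmem : (1:ℝ) ∈ Set.Icc ((fun x : ℝ => ∑' n : ℕ, a n / x ^ (n + 1)) B)
          ((fun x : ℝ => ∑' n : ℕ, a n / x ^ (n + 1)) b) := ⟨hFB.le, hFb.le⟩
      obtain ⟨β, hβmem, hβval⟩ := intermediate_value_Icc' hbB hcontF hmem
      exact ⟨β, lt_of_lt_of_le hb1 hβmem.1, hβval⟩
  · -- Uniqueness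
    intro β γ hβ hβ1 hγ hγ1
    rcases lt_trichotomy β γ with h | h | h
    · exact absurd (key β γ hβ h hβ1 hγ1) not_false
    · exact h
    · exact absurd (key γ β hγ h hγ1 hβ1) not_false
end

section
/- Let a = (a_n) be a sequence of nonnegative real numbers such that ∑_{n≥0} a_n = +∞. Then there exists a sequence β = (β_n) of real numbers each greater than 1 with ∏_{n≥0} β_n = +∞ such that ∑_{n≥0} a_n / ∏_{i=0}^n β_i = 1. -/
open Filter

namespace Stmt2Aux

noncomputable def S (a : ℕ → ℝ) (n : ℕ) : ℝ := ∑ i ∈ Finset.range (n+1), a i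

noncomputable def R (a : ℕ → ℝ) (n : ℕ) : ℝ := 4^((n+1)^2) * (S a n + 1)^2

noncomputable def r (a : ℕ → ℝ) : ℕ → ℝ
  | 0 => R a 0
  | n+1 => R a (n+1) / R a n

noncomputable def bb (a : ℕ → ℝ) (t : ℝ) (n : ℕ) : ℝ := 1 + t * (r a n - 1)

variable {a : ℕ → ℝ}

lemma S_nonneg (ha : ∀ n, 0 ≤ a n) (n : ℕ) : 0 ≤ S a n :=
  Finset.sum_nonneg fun i _ => ha i

lemma S_mono (ha : ∀ n, 0 ≤ a n) (n : ℕ) : S a n ≤ S a (n+1) := by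
  have : S a (n+1) = S a n + a (n+1) := Finset.sum_range_succ a (n+1)
  rw [this]; linarith [ha (n+1)]

lemma a_le_S (ha : ∀ n, 0 ≤ a n) (n : ℕ) : a n ≤ S a n :=
  Finset.single_le_sum (fun i _ => ha i) (Finset.self_mem_range_succ n)

lemma R_pos (ha : ∀ n, 0 ≤ a n) (n : ℕ) : 0 < R a n := by
  have h := S_nonneg ha n
  unfold R; positivity

lemma r_ge (ha : ∀ n, 0 ≤ a n) (n : ℕ) : 4 ≤ r a n := by
  cases n with
  | zero =>
      have h := S_nonneg ha 0
      show (4:ℝ) ≤ R a 0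
      unfold R
      simp only [show ((0:ℕ)+1)^2 = 1 by norm_num, pow_one]
      nlinarith
  | succ n =>
      show (4:ℝ) ≤ R a (n+1) / R a n
      rw [le_div_iff₀ (R_pos ha n)]
      unfold R
      have h1 : ((n+2)^2 : ℕ) = (n+1)^2 + (2*n+3) := by ring
      have h2 : (4:ℝ)^((n+2)^2) = 4^((n+1)^2) * 4^(2*n+3) := by
        rw [h1, pow_add]
      have h3 : (4:ℝ) ≤ 4^(2*n+3) := by
        calc (4:ℝ) = 4^1 := (pow_one 4).symm
        _ ≤ 4^(2*n+3) := pow_le_pow_right₀ (by norm_num) (by omega)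
      have h4 : (S a n + 1)^2 ≤ (S a (n+1) + 1)^2 := by
        have := S_mono ha n
        have := S_nonneg ha n
        nlinarith
      have h5 : (0:ℝ) < 4^((n+1)^2) := by positivity
      have h6 : (0:ℝ) ≤ (S a n + 1)^2 := by positivity
      calc 4 * (4^((n+1)^2) * (S a n + 1)^2)
          ≤ 4^(2*n+3) * (4^((n+1)^2) * (S a (n+1) + 1)^2) := by
            apply mul_le_mul h3 (by nlinarith) (by positivity) (by positivity)
        _ = 4^((n+2)^2) * (S a (n+1) + 1)^2 := by rw [h2]; ring
  where
    _root_unused := 0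

lemma prod_r (ha : ∀ n, 0 ≤ a n) (n : ℕ) :
    ∏ i ∈ Finset.range (n+1), r a i = R a n := by
  induction n with
  | zero => simp [r]
  | succ n ih =>
      rw [Finset.prod_range_succ, ih]
      show R a n * (R a (n+1) / R a n) = R a (n+1)
      rw [mul_comm, div_mul_cancel₀]
      exact ne_of_gt (R_pos ha n)

lemma bb_pos (ha : ∀ n, 0 ≤ a n) {t : ℝ} (ht : 0 ≤ t) (n : ℕ) : 0 < bb a t n := by
  have := r_ge ha n
  unfold bb; nlinarith

lemma cprod_bb_pos (ha : ∀ n, 0 ≤ a n) {t : ℝ} (ht : 0 ≤ t) (n : ℕ) :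
    0 < cprod (bb a t) n :=
  Finset.prod_pos fun i _ => bb_pos ha ht i

lemma cprod_bb_mono (ha : ∀ n, 0 ≤ a n) {t t' : ℝ} (ht : 0 ≤ t) (htt' : t ≤ t') (n : ℕ) :
    cprod (bb a t) n ≤ cprod (bb a t') n := by
  apply Finset.prod_le_prod (fun i _ => le_of_lt (bb_pos ha ht i))
  intro i _
  have := r_ge ha i
  unfold bb; nlinarith

lemma cprod_bb_lb (ha : ∀ n, 0 ≤ a n) {t : ℝ} (ht : 0 < t) (ht1 : t ≤ 1) (n : ℕ) :
    t^(n+1) * R a n ≤ cprod (bb a t) n := by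
  have key : ∏ i ∈ Finset.range (n+1), (t * r a i) ≤ cprod (bb a t) n := by
    apply Finset.prod_le_prod
    · intro i _; have := r_ge ha i; nlinarith
    · intro i _; have := r_ge ha i; unfold bb; nlinarith
  calc t^(n+1) * R a n = ∏ i ∈ Finset.range (n+1), (t * r a i) := by
        rw [Finset.prod_mul_distrib, Finset.prod_const, Finset.card_range, prod_r ha]
    _ ≤ _ := key

lemma cprod_bb_one (ha : ∀ n, 0 ≤ a n) (n : ℕ) : cprod (bb a 1) n = R a n := by
  rw [← prod_r ha n]
  apply Finset.prod_congr rfl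
  intro i _; unfold bb; ring

lemma term_nonneg (ha : ∀ n, 0 ≤ a n) {t : ℝ} (ht : 0 ≤ t) (n : ℕ) :
    0 ≤ a n / cprod (bb a t) n :=
  div_nonneg (ha n) (le_of_lt (cprod_bb_pos ha ht n))

lemma a_le_sq (ha : ∀ n, 0 ≤ a n) (n : ℕ) : a n ≤ (S a n + 1)^2 := by
  have h1 := a_le_S ha n
  have h2 := S_nonneg ha n
  nlinarith

lemma key_bound (ha : ∀ n, 0 ≤ a n) {t : ℝ} (ht : 0 < t) (ht1 : t ≤ 1) {n : ℕ}
    (hn : 2 ≤ t * 4^(n+1)) :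
    a n / cprod (bb a t) n ≤ (1/2:ℝ)^(n+1) := by
  have hpos := cprod_bb_pos ha (le_of_lt ht) n
  rw [div_le_iff₀ hpos]
  have hc : (2:ℝ)^(n+1) * (S a n + 1)^2 ≤ cprod (bb a t) n := by
    refine le_trans ?_ (cprod_bb_lb ha ht ht1 n)
    unfold R
    have : t^(n+1) * (4:ℝ)^((n+1)^2) = (t * 4^(n+1))^(n+1) := by
      rw [mul_pow, ← pow_mul]
      congr 1
      ring
    rw [show t ^ (n + 1) * (4 ^ ((n + 1) ^ 2) * (S a n + 1) ^ 2)
        = (t^(n+1) * 4^((n+1)^2)) * (S a n + 1)^2 by ring, this]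
    have h2 : (2:ℝ)^(n+1) ≤ (t * 4^(n+1))^(n+1) :=
      pow_le_pow_left₀ (by norm_num) hn _
    nlinarith [sq_nonneg (S a n + 1)]
  have h3 : ((1:ℝ)/2)^(n+1) * (2:ℝ)^(n+1) = 1 := by
    rw [← mul_pow]; norm_num
  have h4 := a_le_sq ha n
  calc a n ≤ (S a n + 1)^2 := h4
    _ = ((1/2:ℝ)^(n+1) * (2:ℝ)^(n+1)) * (S a n + 1)^2 := by rw [h3]; ring
    _ = (1/2:ℝ)^(n+1) * ((2:ℝ)^(n+1) * (S a n + 1)^2) := by ring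
    _ ≤ (1/2:ℝ)^(n+1) * cprod (bb a t) n := by
        apply mul_le_mul_of_nonneg_left hc (by positivity)

set_option maxHeartbeats 1000000 in
lemma summable_f (ha : ∀ n, 0 ≤ a n) {t : ℝ} (ht : 0 < t) (ht1 : t ≤ 1) :
    Summable (fun n => a n / cprod (bb a t) n) := by
  obtain ⟨N0, hN0⟩ : ∃ N0, 2/t < (4:ℝ)^N0 :=
    ((tendsto_pow_atTop_atTop_of_one_lt (show (1:ℝ) < 4 by norm_num)).eventually_gt_atTop
      (2/t)).exists
  have hkey : ∀ n, N0 ≤ n → 2 ≤ t * 4^(n+1) := by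
    intro n hn
    have h1 : (4:ℝ)^N0 ≤ 4^(n+1) := pow_le_pow_right₀ (by norm_num) (by omega)
    have h2 : 2/t < (4:ℝ)^(n+1) := lt_of_lt_of_le hN0 h1
    rw [div_lt_iff₀ ht] at h2
    nlinarith
  rw [← summable_nat_add_iff N0]
  have hle : ∀ n : ℕ, a (n+N0) / cprod (bb a t) (n+N0) ≤ (1/2:ℝ)^n := by
    intro n
    calc a (n+N0) / cprod (bb a t) (n+N0) ≤ (1/2:ℝ)^(n+N0+1) :=
          key_bound ha ht ht1 (hkey _ (by omega))
      _ ≤ (1/2:ℝ)^n := pow_le_pow_of_le_one (by norm_num) (by norm_num) (by omega)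
  exact Summable.of_nonneg_of_le (fun n => term_nonneg ha (le_of_lt ht) _) hle
    (summable_geometric_of_lt_one (by norm_num) (by norm_num))

lemma continuous_cprod (n : ℕ) : Continuous (fun t => cprod (bb a t) n) := by
  unfold cprod bb
  apply continuous_finset_prod
  intro i _
  continuity

end Stmt2Aux

open Stmt2Aux in
theorem stmt_2 (a : ℕ → ℝ) (ha : ∀ n, 0 ≤ a n)
    (hdiv : (∑' n : ℕ, ENNReal.ofReal (a n)) = ⊤) :
    ∃ β : ℕ → ℝ, IsCantorBase β ∧ valB β a = 1 := by
  classical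
  -- a is not summable
  have hnsum : ¬ Summable a := by
    intro h
    have h2 := ENNReal.ofReal_tsum_of_nonneg ha h
    exact ENNReal.ofReal_ne_top (h2.trans hdiv)
  have htend := (not_summable_iff_tendsto_nat_atTop_of_nonneg ha).mp hnsum
  obtain ⟨M, hM⟩ := (htend.eventually_ge_atTop 2).exists
  have hSN : 2 ≤ S a M := by
    refine le_trans hM (Finset.sum_le_sum_of_subset_of_nonneg ?_ ?_)
    · exact Finset.range_subset_range.mpr (Nat.le_succ M)
    · exact fun i _ _ => ha i
  set F : ℝ → ℝ := fun t => ∑ n ∈ Finset.range (M+1), a n / cprod (bb a t) n with hFdef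
  have hF0 : F 0 = S a M := by
    rw [hFdef]
    apply Finset.sum_congr rfl
    intro n _
    have : cprod (bb a 0) n = 1 := by
      unfold cprod bb
      simp
    rw [this, div_one]
  have hcont0 : ContinuousAt F 0 := by
    apply tendsto_finset_sum
    intro n _
    apply ContinuousAt.div continuousAt_const (continuous_cprod n).continuousAt
    have : cprod (bb a 0) n = 1 := by unfold cprod bb; simp
    rw [this]; norm_num
  have hlt : (1:ℝ) < F 0 := by rw [hF0]; linarith
  have hgt : ∀ᶠ t in nhds (0:ℝ), 1 < F t := hcont0 (Ioi_mem_nhds hlt)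
  have hgt' : ∀ᶠ t in nhdsWithin (0:ℝ) (Set.Ioi 0), 1 < F t := hgt.filter_mono nhdsWithin_le_nhds
  have hle1 : ∀ᶠ t in nhdsWithin (0:ℝ) (Set.Ioi 0), t ≤ 1 := by
    have h : ∀ᶠ t in nhds (0:ℝ), t < 1 := eventually_lt_nhds (by norm_num)
    exact (h.mono fun t ht => le_of_lt ht).filter_mono nhdsWithin_le_nhds
  have hpos : ∀ᶠ t in nhdsWithin (0:ℝ) (Set.Ioi 0), 0 < t := self_mem_nhdsWithin
  obtain ⟨t1, ht1F, ht1le, ht1pos⟩ := (hgt'.and (hle1.and hpos)).exists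
  set f : ℝ → ℝ := fun u => ∑' n, a n / cprod (bb a u) n with hfdef
  have hconton : ContinuousOn f (Set.Icc t1 1) := by
    apply continuousOn_tsum (u := fun n => a n / cprod (bb a t1) n)
    · intro n
      apply ContinuousOn.div continuousOn_const (continuous_cprod n).continuousOn
      intro t ht
      exact ne_of_gt (cprod_bb_pos ha (le_trans ht1pos.le ht.1) n)
    · exact summable_f ha ht1pos ht1le
    · intro n t ht
      have h0t : (0:ℝ) ≤ t := le_trans ht1pos.le ht.1
      rw [Real.norm_eq_abs, abs_of_nonneg (term_nonneg ha h0t n)]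
      exact div_le_div_of_nonneg_left (ha n) (cprod_bb_pos ha ht1pos.le n)
        (cprod_bb_mono ha ht1pos.le ht.1 n)
  have h1lt : 1 < f t1 := by
    calc (1:ℝ) < F t1 := ht1F
      _ ≤ f t1 := Summable.sum_le_tsum (Finset.range (M+1)) (fun i _ => term_nonneg ha ht1pos.le i)
          (summable_f ha ht1pos ht1le)
  have hf1 : f 1 < 1 := by
    have hsum1 : Summable (fun n => a n / cprod (bb a 1) n) := summable_f ha one_pos le_rfl
    have hterm : ∀ n, a n / cprod (bb a 1) n ≤ (1/4:ℝ)^(n+1) := by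
      intro n
      rw [cprod_bb_one ha, div_le_iff₀ (R_pos ha n)]
      have h1 : (4:ℝ)^(n+1) ≤ 4^((n+1)^2) :=
        pow_le_pow_right₀ (by norm_num) (by nlinarith)
      have h3 : (1:ℝ) ≤ (1/4:ℝ)^(n+1) * 4^((n+1)^2) := by
        rw [one_div, inv_pow, inv_mul_eq_div, le_div_iff₀ (by positivity)]
        simpa using h1
      have h2 := a_le_sq ha n
      unfold R
      calc a n ≤ (S a n + 1)^2 := h2
        _ = 1 * (S a n + 1)^2 := (one_mul _).symm
        _ ≤ ((1/4:ℝ)^(n+1) * 4^((n+1)^2)) * (S a n + 1)^2 :=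
            mul_le_mul_of_nonneg_right h3 (by positivity)
        _ = (1/4:ℝ)^(n+1) * (4^((n+1)^2) * (S a n + 1)^2) := by ring
    have heq : (fun n : ℕ => (1/4:ℝ)^(n+1)) = fun n : ℕ => (1/4:ℝ)^n * (1/4) := by
      funext n; rw [pow_succ]
    have hsumg : Summable (fun n : ℕ => (1/4:ℝ)^(n+1)) := by
      rw [heq]
      exact (summable_geometric_of_lt_one (by norm_num) (by norm_num)).mul_right _
    have hle : f 1 ≤ 1/3 := by
      calc f 1 ≤ ∑' n : ℕ, (1/4:ℝ)^(n+1) := Summable.tsum_le_tsum hterm hsum1 hsumg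
        _ = 1/3 := by
            rw [heq, tsum_mul_right, tsum_geometric_of_lt_one (by norm_num) (by norm_num)]
            norm_num
    linarith
  obtain ⟨t, htmem, hft⟩ :=
    intermediate_value_Icc' ht1le hconton (Set.mem_Icc.mpr ⟨le_of_lt hf1, le_of_lt h1lt⟩)
  have htpos : 0 < t := lt_of_lt_of_le ht1pos htmem.1
  refine ⟨bb a t, ⟨?_, ?_⟩, ?_⟩
  · intro n
    have hr := r_ge ha n
    show 1 < 1 + t * (r a n - 1)
    nlinarith
  · have hlow : ∀ n, (1+3*t)^(n+1) ≤ cprod (bb a t) n := by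
      intro n
      calc (1+3*t)^(n+1) = ∏ _i ∈ Finset.range (n+1), (1+3*t) := by
            rw [Finset.prod_const, Finset.card_range]
        _ ≤ ∏ i ∈ Finset.range (n+1), bb a t i := by
            apply Finset.prod_le_prod (fun i _ => by positivity)
            intro i _
            have := r_ge ha i
            show 1+3*t ≤ 1 + t * (r a i - 1)
            nlinarith
    have hbase : Tendsto (fun n : ℕ => (1+3*t)^(n+1)) atTop atTop := by
      have h := tendsto_pow_atTop_atTop_of_one_lt (show (1:ℝ) < 1+3*t by linarith)
      exact h.comp (tendsto_add_atTop_nat 1)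
    exact tendsto_atTop_mono hlow hbase
  · exact hft
end

section
/- Let a = (a_n) be a sequence of nonnegative real numbers. There exists a Cantor real base β = (β_n) such that ∑_{n≥0} a_n / ∏_{i=0}^n β_i = 1 if and only if ∑_{n≥0} a_n > 1 (where the sum may be +∞). -/
open Filter

theorem stmt_3 (a : ℕ → ℝ) (ha : ∀ n, 0 ≤ a n) :
    (∃ β : ℕ → ℝ, IsCantorBase β ∧ valB β a = 1) ↔
      1 < ∑' n : ℕ, ENNReal.ofReal (a n) := by
  constructor
  · rintro ⟨β, ⟨hβ1, hβtop⟩, hval⟩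
    have hcpos : ∀ n, 1 < cprod β n := by
      intro n
      induction n with
      | zero => simpa [cprod] using hβ1 0
      | succ m ih =>
        have h : cprod β (m+1) = cprod β m * β (m+1) := Finset.prod_range_succ β (m+1)
        rw [h]
        nlinarith [hβ1 (m+1)]
    set f : ℕ → ℝ := fun n => a n / cprod β n with hf
    have hf0 : ∀ n, 0 ≤ f n := fun n => div_nonneg (ha n) (le_of_lt (lt_trans one_pos (hcpos n)))
    rw [valB] at hval
    have hsum : Summable f := by
      by_contra h
      rw [tsum_eq_zero_of_not_summable h] at hval
      norm_num at hval
    have hofReal : ∑' n, ENNReal.ofReal (f n) = 1 := by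
      rw [← ENNReal.ofReal_tsum_of_nonneg hf0 hsum, hval, ENNReal.ofReal_one]
    have hex : ∃ n, 0 < a n := by
      by_contra h
      push_neg at h
      have h0 : ∀ n, a n = 0 := fun n => le_antisymm (h n) (ha n)
      have : (0:ℝ) = 1 := by rw [← hval]; simp [hf, h0]
      norm_num at this
    obtain ⟨n₀, hn₀⟩ := hex
    have hle : ∀ n, ENNReal.ofReal (f n) ≤ ENNReal.ofReal (a n) := fun n =>
      ENNReal.ofReal_le_ofReal (div_le_self (ha n) (le_of_lt (hcpos n)))
    have hlt : ENNReal.ofReal (f n₀) < ENNReal.ofReal (a n₀) := by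
      rw [ENNReal.ofReal_lt_ofReal_iff hn₀]
      exact div_lt_self hn₀ (hcpos n₀)
    rw [← hofReal]
    exact ENNReal.tsum_lt_tsum (by rw [hofReal]; exact ENNReal.one_ne_top) hle hlt
  · intro h
    rw [ENNReal.tsum_eq_iSup_sum, lt_iSup_iff] at h
    obtain ⟨F, hF⟩ := h
    obtain ⟨N, hFN⟩ := F.exists_nat_subset_range
    have hsN : 1 < ∑ n ∈ Finset.range N, a n := by
      have h1 : (1:ENNReal) < ∑ n ∈ Finset.range N, ENNReal.ofReal (a n) :=
        lt_of_lt_of_le hF (Finset.sum_le_sum_of_subset hFN)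
      rw [← ENNReal.ofReal_sum_of_nonneg (fun n _ => ha n), ENNReal.one_lt_ofReal] at h1
      exact h1
    have hN0 : 0 < N := by
      rcases Nat.eq_zero_or_pos N with h0 | h0
      · rw [h0] at hsN; simp at hsN; linarith
      · exact h0
    -- find t ∈ (0,1) with polynomial value > 1
    set P : ℝ → ℝ := fun t => ∑ n ∈ Finset.range N, a n * t ^ n with hP
    have hPc : Continuous P := by
      apply continuous_finset_sum
      intro i _
      exact (continuous_const.mul (continuous_pow i))
    have hP1 : 1 < P 1 := by simpa [hP] using hsN
    have hev : ∀ᶠ t in nhdsWithin 1 (Set.Iio 1), 1 < P t ∧ t ∈ Set.Ioo (0:ℝ) 1 := by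
      refine Filter.Eventually.and ?_ ?_
      · exact ((hPc.tendsto 1).mono_left nhdsWithin_le_nhds).eventually (eventually_gt_nhds hP1)
      · exact Filter.eventually_of_mem
          (Ioo_mem_nhdsLT_of_mem (by constructor <;> norm_num : (1:ℝ) ∈ Set.Ioc 0 1))
          (fun t ht => ht)
    obtain ⟨t, hPt, ht0, ht1⟩ := hev.exists
    -- construction
    set b : ℕ → ℝ := fun k => if k < N then 1 else min 1 ((2:ℝ)⁻¹ ^ k / ((a k + 1) * t ^ k))
      with hb
    have hb0 : ∀ k, 0 < b k := by
      intro k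
      rw [hb]; dsimp only; split
      · norm_num
      · exact lt_min one_pos (div_pos (pow_pos (by norm_num) k)
          (mul_pos (by linarith [ha k]) (pow_pos ht0 k)))
    have hb1 : ∀ k, b k ≤ 1 := by
      intro k
      rw [hb]; dsimp only; split
      · exact le_refl 1
      · exact min_le_left _ _
    set v : ℕ → ℝ := fun n => t ^ n * ∏ k ∈ Finset.range (n+1), b k with hv
    have hv0 : ∀ n, 0 < v n := fun n =>
      mul_pos (pow_pos ht0 n) (Finset.prod_pos fun k _ => hb0 k)
    have hprodle : ∀ n, ∏ k ∈ Finset.range n, b k ≤ 1 := fun n =>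
      Finset.prod_le_one (fun k _ => (hb0 k).le) (fun k _ => hb1 k)
    have hvle : ∀ n, v n ≤ t ^ n := by
      intro n
      rw [hv]; dsimp only
      nlinarith [hprodle (n+1), pow_pos ht0 n,
        Finset.prod_pos (fun k (_ : k ∈ Finset.range (n+1)) => hb0 k)]
    have hvsucc : ∀ n, v (n+1) = v n * (t * b (n+1)) := by
      intro n
      rw [hv]; dsimp only
      rw [Finset.prod_range_succ]
      ring
    have hvN : ∀ n, n < N → v n = t ^ n := by
      intro n hn
      rw [hv]; dsimp only
      rw [Finset.prod_eq_one, mul_one]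
      intro k hk
      rw [hb]; dsimp only
      rw [if_pos (lt_of_le_of_lt (Nat.lt_succ_iff.1 (Finset.mem_range.1 hk)) hn)]
    have hterm : ∀ n, N ≤ n → a n * v n ≤ (2:ℝ)⁻¹ ^ n := by
      intro n hn
      have hbn : b n ≤ (2:ℝ)⁻¹ ^ n / ((a n + 1) * t ^ n) := by
        rw [hb]; dsimp only
        rw [if_neg (by omega)]
        exact min_le_right _ _
      have hprod : ∏ k ∈ Finset.range (n+1), b k ≤ b n := by
        rw [Finset.prod_range_succ]
        exact mul_le_of_le_one_left (hb0 n).le (hprodle n)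
      have h1 : v n ≤ t ^ n * ((2:ℝ)⁻¹ ^ n / ((a n + 1) * t ^ n)) := by
        rw [hv]; dsimp only
        exact mul_le_mul_of_nonneg_left (le_trans hprod hbn) (pow_pos ht0 n).le
      have heq : t ^ n * ((2:ℝ)⁻¹ ^ n / ((a n + 1) * t ^ n)) = (2:ℝ)⁻¹ ^ n / (a n + 1) := by
        have h2 : a n + 1 ≠ 0 := ne_of_gt (by linarith [ha n])
        have h3 : t ^ n ≠ 0 := ne_of_gt (pow_pos ht0 n)
        field_simp
      rw [heq] at h1
      calc a n * v n ≤ a n * ((2:ℝ)⁻¹ ^ n / (a n + 1)) :=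
            mul_le_mul_of_nonneg_left h1 (ha n)
        _ = (2:ℝ)⁻¹ ^ n * (a n / (a n + 1)) := by ring
        _ ≤ (2:ℝ)⁻¹ ^ n * 1 := by
            apply mul_le_mul_of_nonneg_left _ (by positivity)
            rw [div_le_one (by linarith [ha n])]
            linarith
        _ = (2:ℝ)⁻¹ ^ n := mul_one _
    set g : ℕ → ℝ := fun n => a n * v n with hg
    have hg0 : ∀ n, 0 ≤ g n := fun n => mul_nonneg (ha n) (hv0 n).le
    have hgs : Summable g := by
      refine Summable.of_nonneg_of_le
        (f := fun n => (if n < N then a n * t ^ n else 0) + (2:ℝ)⁻¹ ^ n) hg0 ?_ ?_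
      · intro n
        by_cases hn : n < N
        · rw [if_pos hn]
          have h1 : g n ≤ a n * t ^ n := mul_le_mul_of_nonneg_left (hvle n) (ha n)
          have h2 : (0:ℝ) ≤ (2:ℝ)⁻¹ ^ n := by positivity
          linarith
        · rw [if_neg hn]
          have := hterm n (le_of_not_gt hn)
          show a n * v n ≤ 0 + 2⁻¹ ^ n
          linarith
      · apply Summable.add
        · apply summable_of_ne_finset_zero (s := Finset.range N)
          intro n hn
          rw [if_neg (by simpa using hn)]
        · exact summable_geometric_of_lt_one (by norm_num) (by norm_num)
    set S : ℝ := ∑' n, g n with hS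
    have hS1 : 1 < S := by
      have h1 : ∑ n ∈ Finset.range N, g n ≤ S := Summable.sum_le_tsum _ (fun n _ => hg0 n) hgs
      have heq : ∑ n ∈ Finset.range N, g n = ∑ n ∈ Finset.range N, a n * t ^ n :=
        Finset.sum_congr rfl (fun n hn => by
          rw [hg]; dsimp only; rw [hvN n (Finset.mem_range.1 hn)])
      rw [heq] at h1
      exact lt_of_lt_of_le hPt h1
    have hS0 : 0 < S := lt_trans one_pos hS1
    set β : ℕ → ℝ := fun n => Nat.casesOn n S (fun m => v m / v (m+1)) with hβ
    have hβ1 : ∀ n, 1 < β n := by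
      intro n
      cases n with
      | zero => exact hS1
      | succ m =>
        show 1 < v m / v (m+1)
        rw [lt_div_iff₀ (hv0 (m+1)), one_mul, hvsucc m]
        have h1 : t * b (m+1) < 1 := by nlinarith [hb1 (m+1), hb0 (m+1)]
        nlinarith [hv0 m, hb0 (m+1)]
    have hv00 : v 0 = 1 := by rw [hvN 0 hN0]; norm_num
    have hcp : ∀ n, cprod β n = S / v n := by
      intro n
      induction n with
      | zero => simp [cprod, hβ, hv00]
      | succ m ih =>
        show ∏ i ∈ Finset.range (m+2), β i = S / v (m+1)
        rw [Finset.prod_range_succ]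
        have : ∏ i ∈ Finset.range (m+1), β i = S / v m := ih
        rw [this]
        show S / v m * (v m / v (m+1)) = S / v (m+1)
        rw [div_mul_div_comm, mul_comm (v m) (v (m+1)),
          mul_div_mul_right _ _ (ne_of_gt (hv0 m))]
    refine ⟨β, ⟨hβ1, ?_⟩, ?_⟩
    · have h1 : Tendsto (fun n : ℕ => S * t⁻¹ ^ n) atTop atTop :=
        Tendsto.const_mul_atTop hS0
          (tendsto_pow_atTop_atTop_of_one_lt (one_lt_inv₀ ht0 |>.2 ht1))
      apply tendsto_atTop_mono _ h1
      intro n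
      rw [hcp n]
      calc S * t⁻¹ ^ n = S / t ^ n := by rw [inv_pow, ← div_eq_mul_inv]
        _ ≤ S / v n := by
            apply div_le_div_of_nonneg_left hS0.le (hv0 n) (hvle n)
    · rw [valB]
      have h1 : ∀ n, a n / cprod β n = g n / S := by
        intro n
        rw [hcp n, div_div_eq_mul_div]
      rw [tsum_congr h1, tsum_div_const, ← hS, div_self (ne_of_gt hS0)]
end

section
/- Let β = (β_n) be a Cantor real base and x ∈ [0,1]. Then x = ∑_{n≥0} ε_n(x) / ∏_{i=0}^n β_i, where ε_n(x) are the digits produced by the greedy algorithm; in particular, the greedy algorithm converges. -/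
open Filter

lemma greedyRem_mem (β : ℕ → ℝ) (x : ℝ) (n : ℕ) :
    greedyRem β x n ∈ Set.Ico (0:ℝ) 1 := by
  cases n with
  | zero =>
    have h := Int.fract_nonneg (β 0 * x)
    have h2 := Int.fract_lt_one (β 0 * x)
    simp only [Int.fract] at h h2
    exact ⟨h, h2⟩
  | succ n =>
    have h := Int.fract_nonneg (β (n+1) * greedyRem β x n)
    have h2 := Int.fract_lt_one (β (n+1) * greedyRem β x n)
    simp only [Int.fract] at h h2
    exact ⟨h, h2⟩

lemma cprod_pos (β : ℕ → ℝ) (hβ : ∀ n, 1 < β n) (n : ℕ) : 0 < cprod β n :=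
  Finset.prod_pos fun i _ => lt_trans one_pos (hβ i)

lemma greedy_cast (β : ℕ → ℝ) (hβ : ∀ n, 1 < β n) (x : ℝ) (hx : 0 ≤ x) (n : ℕ) :
    (greedy β x n : ℝ) = (⌊match n with
      | 0 => β 0 * x
      | Nat.succ m => β (m+1) * greedyRem β x m⌋ : ℝ) := by
  cases n with
  | zero =>
    have h0 : (0:ℤ) ≤ ⌊β 0 * x⌋ :=
      Int.floor_nonneg.2 (mul_nonneg (le_of_lt (lt_trans one_pos (hβ 0))) hx)
    simp only [greedy]
    exact_mod_cast Int.toNat_of_nonneg h0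
  | succ n =>
    have h0 : (0:ℤ) ≤ ⌊β (n+1) * greedyRem β x n⌋ :=
      Int.floor_nonneg.2 (mul_nonneg (le_of_lt (lt_trans one_pos (hβ (n+1))))
        (greedyRem_mem β x n).1)
    simp only [greedy]
    exact_mod_cast Int.toNat_of_nonneg h0

lemma partial_sum_eq (β : ℕ → ℝ) (hβ : ∀ n, 1 < β n) (x : ℝ) (hx : 0 ≤ x) (n : ℕ) :
    ∑ i ∈ Finset.range (n+1), (greedy β x i : ℝ) / cprod β i
      = x - greedyRem β x n / cprod β n := by
  induction n with
  | zero =>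
    have hb : β 0 ≠ 0 := ne_of_gt (lt_trans one_pos (hβ 0))
    have hc : cprod β 0 = β 0 := by simp [cprod]
    rw [Finset.sum_range_one, greedy_cast β hβ x hx 0, hc]
    simp only [greedyRem]
    field_simp
    ring
  | succ n ih =>
    rw [Finset.sum_range_succ, ih]
    have hc : cprod β (n+1) = cprod β n * β (n+1) := by
      simp [cprod, Finset.prod_range_succ]
    have hcn : cprod β n ≠ 0 := ne_of_gt (cprod_pos β hβ n)
    have hb : β (n+1) ≠ 0 := ne_of_gt (lt_trans one_pos (hβ (n+1)))
    rw [greedy_cast β hβ x hx (n+1), hc]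
    simp only [greedyRem]
    field_simp
    ring

theorem stmt_4 (β : ℕ → ℝ) (hβ : IsCantorBase β) (x : ℝ)
    (hx : x ∈ Set.Icc (0:ℝ) 1) :
    Summable (fun n => (greedy β x n : ℝ) / cprod β n) ∧ valN β (greedy β x) = x := by
  obtain ⟨hβ1, hβ2⟩ := hβ
  have hx0 : 0 ≤ x := hx.1
  have hnn : ∀ n, 0 ≤ (greedy β x n : ℝ) / cprod β n := fun n =>
    div_nonneg (Nat.cast_nonneg _) (le_of_lt (cprod_pos β hβ1 n))
  have hbound : ∀ n, ∑ i ∈ Finset.range n, (greedy β x i : ℝ) / cprod β i ≤ x := by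
    intro n
    cases n with
    | zero => simpa using hx0
    | succ m =>
      rw [partial_sum_eq β hβ1 x hx0 m]
      have : 0 ≤ greedyRem β x m / cprod β m :=
        div_nonneg (greedyRem_mem β x m).1 (le_of_lt (cprod_pos β hβ1 m))
      linarith
  have hsum : Summable (fun n => (greedy β x n : ℝ) / cprod β n) :=
    summable_of_sum_range_le hnn hbound
  refine ⟨hsum, ?_⟩
  have htend : Tendsto (fun n => ∑ i ∈ Finset.range (n+1),
      (greedy β x i : ℝ) / cprod β i) atTop (nhds x) := by
    have heq : (fun n => ∑ i ∈ Finset.range (n+1), (greedy β x i : ℝ) / cprod β i)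
        = fun n => x - greedyRem β x n / cprod β n := by
      funext n; exact partial_sum_eq β hβ1 x hx0 n
    rw [heq]
    have h0 : Tendsto (fun n => greedyRem β x n / cprod β n) atTop (nhds 0) := by
      have hinv : Tendsto (fun n => (cprod β n)⁻¹) atTop (nhds 0) :=
        tendsto_inv_atTop_zero.comp hβ2
      refine squeeze_zero (fun n => div_nonneg (greedyRem_mem β x n).1
        (le_of_lt (cprod_pos β hβ1 n))) (fun n => ?_) hinv
      rw [div_eq_mul_inv]
      have := (greedyRem_mem β x n).2
      nlinarith [(greedyRem_mem β x n).1, inv_pos.2 (cprod_pos β hβ1 n),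
        inv_nonneg.2 (le_of_lt (cprod_pos β hβ1 n))]
    have := Tendsto.sub (tendsto_const_nhds (x := x) (f := atTop)) h0
    simpa using this
  have htend' : Tendsto (fun n => ∑ i ∈ Finset.range n,
      (greedy β x i : ℝ) / cprod β i) atTop (nhds x) :=
    (tendsto_add_atTop_iff_nat 1).mp htend
  exact tendsto_nhds_unique hsum.hasSum.tendsto_sum_nat htend'
end

section
/- Let β = (β_n) be a Cantor real base and a a β-representation of some x ∈ [0,1] (i.e., a ∈ ℕ^ℕ with val_β(a) = x). Then a is the greedy β-expansion of x if and only if for all n ≥ 1, val_{β^{(n)}}(σ^n(a)) < 1, where β^{(n)} = (β_n, β_{n+1}, …) and σ is the shift operator. -/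
open Filter

namespace Aux

lemma prodpos (β : ℕ → ℝ) (hβ : ∀ n, 1 < β n) (n : ℕ) :
    0 < ∏ i ∈ Finset.range n, β i :=
  Finset.prod_pos fun i _ => lt_trans one_pos (hβ i)

lemma cprod_pos (β : ℕ → ℝ) (hβ : ∀ n, 1 < β n) (n : ℕ) : 0 < cprod β n :=
  prodpos β hβ (n+1)

lemma cprod_split (β : ℕ → ℝ) (n k : ℕ) :
    cprod β (n + k) = (∏ i ∈ Finset.range n, β i) * cprod (shiftBase β n) k := by
  unfold cprod shiftBase
  rw [show n + k + 1 = n + (k+1) by ring, Finset.prod_range_add]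

lemma summable_shift (β : ℕ → ℝ) (a : ℕ → ℕ)
    (hsum : Summable (fun n => (a n : ℝ) / cprod β n)) (n : ℕ) :
    Summable (fun k => (a (n+k) : ℝ) / cprod β (n+k)) := by
  have h := (summable_nat_add_iff n).mpr hsum
  exact h.congr fun k => by rw [add_comm]

lemma T_eq (β : ℕ → ℝ) (hβ : ∀ n, 1 < β n) (a : ℕ → ℕ) (n : ℕ) :
    valN (shiftBase β n) (shiftSeq a n)
      = (∏ i ∈ Finset.range n, β i) * ∑' k, (a (n+k) : ℝ) / cprod β (n+k) := by
  unfold valN valB shiftSeq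
  rw [← tsum_mul_left]
  refine tsum_congr fun k => ?_
  rw [cprod_split β n k]
  have h1 : (∏ i ∈ Finset.range n, β i) ≠ 0 := (prodpos β hβ n).ne'
  have h2 : cprod (shiftBase β n) k ≠ 0 :=
    (cprod_pos (shiftBase β n) (fun j => hβ (n+j)) k).ne'
  field_simp

lemma T_nonneg (β : ℕ → ℝ) (hβ : ∀ n, 1 < β n) (a : ℕ → ℕ) (n : ℕ) :
    0 ≤ valN (shiftBase β n) (shiftSeq a n) := by
  unfold valN valB
  refine tsum_nonneg fun k => div_nonneg (by positivity) ?_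
  exact (cprod_pos (shiftBase β n) (fun k => hβ (n+k)) k).le

lemma T_zero (β : ℕ → ℝ) (a : ℕ → ℕ) :
    valN (shiftBase β 0) (shiftSeq a 0) = valN β a := by
  unfold valN valB shiftBase shiftSeq
  simp

lemma T_rec (β : ℕ → ℝ) (hβ : ∀ n, 1 < β n) (a : ℕ → ℕ)
    (hsum : Summable (fun n => (a n : ℝ) / cprod β n)) (n : ℕ) :
    β n * valN (shiftBase β n) (shiftSeq a n)
      = (a n : ℝ) + valN (shiftBase β (n+1)) (shiftSeq a (n+1)) := by
  rw [T_eq β hβ a n, T_eq β hβ a (n+1)]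
  have hs := summable_shift β a hsum n
  have hsplit : (∑' k, (a (n+k) : ℝ) / cprod β (n+k))
      = (a n : ℝ) / cprod β n + ∑' k, (a (n+1+k) : ℝ) / cprod β (n+1+k) := by
    rw [Summable.tsum_eq_zero_add hs]
    simp only [add_zero]
    congr 1
    exact tsum_congr fun k => by rw [show n + (k+1) = n+1+k by ring]
  rw [hsplit]
  have hP : (0:ℝ) < ∏ i ∈ Finset.range n, β i := prodpos β hβ n
  have hPn : cprod β n = (∏ i ∈ Finset.range n, β i) * β n := Finset.prod_range_succ β n
  have hP1 : (∏ i ∈ Finset.range (n+1), β i) = (∏ i ∈ Finset.range n, β i) * β n :=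
    Finset.prod_range_succ β n
  have hb : (0:ℝ) < β n := lt_trans one_pos (hβ n)
  rw [hPn, hP1]
  field_simp

lemma floor_add_aux (m : ℕ) (t : ℝ) (h0 : 0 ≤ t) (h1 : t < 1) : ⌊(m:ℝ) + t⌋ = m := by
  rw [Int.floor_eq_iff]
  constructor <;> push_cast <;> linarith

lemma greedyRem_lt_one' (y : ℝ) : 0 ≤ y - ⌊y⌋ ∧ y - ⌊y⌋ < 1 := by
  have := Int.floor_le y
  have := Int.lt_floor_add_one y
  constructor <;> linarith

end Aux

theorem Aux.stmt_6_main (β : ℕ → ℝ) (hβ : (∀ n, 1 < β n)) (x : ℝ)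
    (hx : x ∈ Set.Icc (0:ℝ) 1) (a : ℕ → ℕ)
    (hsum : Summable (fun n => (a n : ℝ) / cprod β n)) (hval : valN β a = x) :
    a = greedy β x ↔ ∀ n : ℕ, 1 ≤ n → valN (shiftBase β n) (shiftSeq a n) < 1 := by
  set T : ℕ → ℝ := fun n => valN (shiftBase β n) (shiftSeq a n) with hT
  have hT0 : T 0 = x := (Aux.T_zero β a).trans hval
  have hrec : ∀ n, β n * T n = (a n : ℝ) + T (n+1) := Aux.T_rec β hβ a hsum
  have hTnn : ∀ n, 0 ≤ T n := Aux.T_nonneg β hβ a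
  constructor
  · intro ha n hn
    -- forward: T (m+1) = greedyRem β x m, which is < 1
    have key : ∀ m, T (m+1) = greedyRem β x m := by
      intro m
      induction m with
      | zero =>
        have h0 : (a 0 : ℝ) = (⌊β 0 * x⌋ : ℤ) := by
          have hnn : (0:ℤ) ≤ ⌊β 0 * x⌋ := by
            apply Int.floor_nonneg.mpr
            have := hx.1
            have hb := lt_trans one_pos (hβ 0)
            positivity
          rw [ha]
          simp only [greedy]
          exact_mod_cast Int.toNat_of_nonneg hnn
        have := hrec 0
        rw [hT0, h0] at this
        simp only [greedyRem]
        linarith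
      | succ m ih =>
        have hnn : (0:ℤ) ≤ ⌊β (m+1) * greedyRem β x m⌋ := by
          apply Int.floor_nonneg.mpr
          have h1 := (Aux.greedyRem_lt_one' (β (m+1-1+1) * greedyRem β x (m+1-1))).1
          have hb := lt_trans one_pos (hβ (m+1))
          have hg0 : 0 ≤ greedyRem β x m := by
            rw [← ih]; exact hTnn (m+1)
          positivity
        have h0 : (a (m+1) : ℝ) = (⌊β (m+1) * greedyRem β x m⌋ : ℤ) := by
          rw [ha]
          simp only [greedy]
          exact_mod_cast Int.toNat_of_nonneg hnn
        have := hrec (m+1)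
        rw [ih, h0] at this
        simp only [greedyRem]
        linarith
    obtain ⟨m, rfl⟩ : ∃ m, n = m + 1 := ⟨n - 1, by omega⟩
    rw [show valN (shiftBase β (m+1)) (shiftSeq a (m+1)) = T (m+1) from rfl, key m]
    cases m with
    | zero => exact (Aux.greedyRem_lt_one' (β 0 * x)).2
    | succ m => exact (Aux.greedyRem_lt_one' (β (m+1) * greedyRem β x m)).2
  · intro h
    have hlt : ∀ n, T (n+1) < 1 := fun n => h (n+1) (by omega)
    have key : ∀ n, a n = greedy β x n ∧ greedyRem β x n = T (n+1) := by
      intro n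
      induction n with
      | zero =>
        have e : β 0 * x = (a 0 : ℝ) + T 1 := by rw [← hT0]; exact hrec 0
        have hf : ⌊β 0 * x⌋ = (a 0 : ℤ) := by
          rw [e]; exact_mod_cast Aux.floor_add_aux (a 0) (T 1) (hTnn 1) (hlt 0)
        constructor
        · simp [greedy, hf]
        · simp only [greedyRem]
          rw [hf]; push_cast; linarith
      | succ n ih =>
        have e : β (n+1) * greedyRem β x n = (a (n+1) : ℝ) + T (n+2) := by
          rw [ih.2]; exact hrec (n+1)
        have hf : ⌊β (n+1) * greedyRem β x n⌋ = (a (n+1) : ℤ) := by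
          rw [e]; exact_mod_cast Aux.floor_add_aux (a (n+1)) (T (n+2)) (hTnn (n+2)) (hlt (n+1))
        constructor
        · simp [greedy, hf]
        · simp only [greedyRem]
          rw [hf]; push_cast; linarith
    funext n
    exact (key n).1

theorem stmt_6 (β : ℕ → ℝ) (hβ : IsCantorBase β) (x : ℝ)
    (hx : x ∈ Set.Icc (0:ℝ) 1) (a : ℕ → ℕ)
    (hsum : Summable (fun n => (a n : ℝ) / cprod β n)) (hval : valN β a = x) :
    a = greedy β x ↔ ∀ n : ℕ, 1 ≤ n → valN (shiftBase β n) (shiftSeq a n) < 1 :=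
  Aux.stmt_6_main β hβ.1 x hx a hsum hval
end

section
/- Let β = (β_n) be a Cantor real base and a a β-representation of some x ∈ [0,1]. Then a is the greedy β-expansion of x if and only if for all n ≥ 1, σ^n(a) <_lex d*_{β^{(n)}}(1). -/
open Filter

namespace Aux14

noncomputable def Dp (β : ℕ → ℝ) (n L : ℕ) : ℝ := ∏ i ∈ Finset.range L, β (n + i)

lemma Dp_zero (β : ℕ → ℝ) (n : ℕ) : Dp β n 0 = 1 := Finset.prod_range_zero _

lemma Dp_succ (β : ℕ → ℝ) (n L : ℕ) : Dp β n (L+1) = Dp β n L * β (n+L) :=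
  Finset.prod_range_succ _ _

lemma one_le_Dp {β : ℕ → ℝ} (hβ : ∀ k, 1 < β k) (n L : ℕ) : 1 ≤ Dp β n L := by
  induction L with
  | zero => rw [Dp_zero]
  | succ L ih => rw [Dp_succ]; nlinarith [hβ (n+L)]

lemma Dp_pos {β : ℕ → ℝ} (hβ : ∀ k, 1 < β k) (n L : ℕ) : 0 < Dp β n L :=
  zero_lt_one.trans_le (one_le_Dp hβ n L)

lemma Dp_add (β : ℕ → ℝ) (n L M : ℕ) : Dp β n (L + M) = Dp β n L * Dp β (n+L) M := by
  induction M with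
  | zero => simp [Dp_zero]
  | succ M ih =>
      rw [show L + (M+1) = (L+M)+1 from rfl, Dp_succ, ih, Dp_succ,
        show n + L + M = n + (L + M) by omega]
      ring

lemma cprod_sb (β : ℕ → ℝ) (n k : ℕ) : cprod (shiftBase β n) k = Dp β n (k+1) := rfl

lemma cprod_eq (β : ℕ → ℝ) (k : ℕ) : cprod β k = Dp β 0 (k+1) :=
  Finset.prod_congr rfl fun i _ => by rw [Nat.zero_add]

lemma Dp_sb (β : ℕ → ℝ) (n L : ℕ) : Dp (shiftBase β n) 0 L = Dp β n L :=
  Finset.prod_congr rfl fun i _ => by show β (n + (0 + i)) = β (n + i); rw [Nat.zero_add]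

lemma Dp_tendsto {β : ℕ → ℝ} (hβ : IsCantorBase β) (n : ℕ) :
    Tendsto (fun L => Dp β n L) atTop atTop := by
  have hadd : Tendsto (fun L : ℕ => n + L) atTop atTop := by
    simpa [Nat.add_comm] using tendsto_add_atTop_nat n
  have h1 : Tendsto (fun L => Dp β 0 (n + L + 1)) atTop atTop := by
    refine (hβ.2.comp hadd).congr fun L => ?_
    exact cprod_eq β (n + L)
  have h2 : Tendsto (fun L => Dp β n (L+1)) atTop atTop := by
    refine (h1.atTop_div_const (Dp_pos hβ.1 0 n)).congr fun L => ?_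
    rw [show n + L + 1 = n + (L+1) by omega, Dp_add]
    field_simp [ (Dp_pos hβ.1 0 n).ne' ]
    simp only [Nat.zero_add]
  exact (tendsto_add_atTop_iff_nat 1).1 h2

lemma one_div_Dp_tendsto {β : ℕ → ℝ} (hβ : IsCantorBase β) (n : ℕ) :
    Tendsto (fun L => 1 / Dp β n L) atTop (nhds 0) := by
  simpa [one_div, Pi.inv_def] using (Dp_tendsto hβ n).inv_tendsto_atTop


section TV
variable {β : ℕ → ℝ} {a : ℕ → ℕ}

/-- tail value of the representation from position `n`. -/
noncomputable def tv (β : ℕ → ℝ) (a : ℕ → ℕ) (n : ℕ) : ℝ :=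
  ∑' k, (a (n+k) : ℝ) / Dp β n (k+1)

lemma tv_eq_valN (β : ℕ → ℝ) (a : ℕ → ℕ) (n : ℕ) :
    tv β a n = valN (shiftBase β n) (shiftSeq a n) := rfl

lemma summable_tail (hβ : ∀ k, 1 < β k)
    (hsum : Summable (fun n => (a n : ℝ) / cprod β n)) (n : ℕ) :
    Summable (fun k => (a (n+k) : ℝ) / Dp β n (k+1)) := by
  have h0 : Summable (fun k => (a k : ℝ) / Dp β 0 (k+1)) := by
    refine hsum.congr fun k => ?_
    rw [cprod_eq]
  have h1 : Summable (fun k => (a (n+k) : ℝ) / Dp β 0 (n+k+1)) := by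
    have := (summable_nat_add_iff (f := fun k => (a k : ℝ) / Dp β 0 (k+1)) n).2 h0
    refine this.congr fun k => ?_
    rw [Nat.add_comm k n]
  refine (h1.mul_right (Dp β 0 n)).congr fun k => ?_
  have hkey : Dp β 0 (n+k+1) = Dp β 0 n * Dp β n (k+1) := by
    have h := Dp_add β 0 n (k+1)
    rw [Nat.zero_add, show n + (k+1) = n+k+1 by omega] at h
    exact h
  have hp0 := Dp_pos hβ 0 n
  rw [hkey, mul_comm (Dp β 0 n) (Dp β n (k+1)), ← div_div,
    div_mul_cancel₀ _ hp0.ne']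

lemma tv_nonneg (hβ : ∀ k, 1 < β k) (n : ℕ) : 0 ≤ tv β a n :=
  tsum_nonneg fun k => div_nonneg (Nat.cast_nonneg _) (Dp_pos hβ n (k+1)).le

lemma tv_rec (hβ : ∀ k, 1 < β k)
    (hsum : Summable (fun n => (a n : ℝ) / cprod β n)) (n : ℕ) :
    β n * tv β a n = (a n : ℝ) + tv β a (n+1) := by
  have hb := hβ n
  have hbne : β n ≠ 0 := by positivity
  have h1 : tv β a n = (a (n+0) : ℝ) / Dp β n 1 +
      ∑' k, (a (n+(k+1)) : ℝ) / Dp β n (k+1+1) :=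
    Summable.tsum_eq_zero_add (summable_tail hβ hsum n)
  have h2 : ∀ k : ℕ, (a (n+(k+1)) : ℝ) / Dp β n (k+1+1)
      = ((a ((n+1)+k) : ℝ) / Dp β (n+1) (k+1)) / β n := by
    intro k
    have : Dp β n (k+2) = β n * Dp β (n+1) (k+1) := by
      rw [show k+2 = 1 + (k+1) by omega, Dp_add, Dp_succ, Dp_zero]
      simp
    rw [show n+(k+1) = (n+1)+k by omega, show k+1+1 = k+2 from rfl, this,
      mul_comm (β n), ← div_div]
  rw [h1]
  have h3 : ∑' k, (a (n+(k+1)) : ℝ) / Dp β n (k+1+1) = tv β a (n+1) / β n := by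
    calc ∑' k, (a (n+(k+1)) : ℝ) / Dp β n (k+1+1)
        = ∑' k, ((a ((n+1)+k) : ℝ) / Dp β (n+1) (k+1)) / β n := tsum_congr h2
      _ = tv β a (n+1) / β n := tsum_div_const
  rw [h3]
  have hD1 : Dp β n 1 = β n := by rw [Dp_succ, Dp_zero]; simp
  rw [hD1]
  field_simp
  simp only [Nat.add_zero]

lemma finite_exp (hβ : ∀ k, 1 < β k) (g : ℕ → ℝ)
    (hrec : ∀ k, β k * g k = (a k : ℝ) + g (k+1)) (n : ℕ) :
    ∀ L, g n = (∑ k ∈ Finset.range L, (a (n+k) : ℝ) / Dp β n (k+1)) + g (n+L) / Dp β n L := by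
  intro L
  induction L with
  | zero => simp [Dp_zero]
  | succ L ih =>
      have hb := hβ (n+L)
      have hbne : β (n+L) ≠ 0 := by positivity
      have hDne : Dp β n L ≠ 0 := (Dp_pos hβ n L).ne'
      have hg : g (n+L) = ((a (n+L) : ℝ) + g (n+L+1)) / β (n+L) := by
        rw [eq_div_iff hbne]; linarith [hrec (n+L)]
      rw [ih, Finset.sum_range_succ, hg, show n+(L+1) = n+L+1 by omega, Dp_succ]
      field_simp
      ring

lemma tv_finite (hβ : ∀ k, 1 < β k)
    (hsum : Summable (fun n => (a n : ℝ) / cprod β n)) (n L : ℕ) :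
    tv β a n = (∑ k ∈ Finset.range L, (a (n+k) : ℝ) / Dp β n (k+1))
      + tv β a (n+L) / Dp β n L :=
  finite_exp hβ (tv β a) (tv_rec hβ hsum) n L

lemma tv_div (hβ : ∀ k, 1 < β k) (n j : ℕ) :
    tv β a (n+j) / Dp β n j = ∑' k, (a (n+(j+k)) : ℝ) / Dp β n (j+k+1) := by
  rw [tv, ← tsum_div_const]
  refine tsum_congr fun k => ?_
  have : Dp β n (j+k+1) = Dp β n j * Dp β (n+j) (k+1) := by
    rw [← Dp_add, show j+(k+1) = j+k+1 by omega]
  rw [show n+(j+k) = (n+j)+k by omega, this, mul_comm (Dp β n j), ← div_div]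

lemma tv_tail_tendsto (hβ : ∀ k, 1 < β k)
    (hsum : Summable (fun n => (a n : ℝ) / cprod β n)) (n : ℕ) :
    Tendsto (fun j => tv β a (n+j) / Dp β n j) atTop (nhds 0) := by
  have := tendsto_sum_nat_add (fun k => (a (n+k) : ℝ) / Dp β n (k+1))
  refine this.congr fun j => ?_
  rw [tv_div hβ n j]
  exact tsum_congr fun k => by rw [Nat.add_comm k j]

end TV


section QG
variable {γ : ℕ → ℝ}

lemma frac_pos (t : ℝ) : 0 < t - ((⌈t⌉ : ℝ) - 1) := by
  have := Int.ceil_lt_add_one t; linarith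

lemma frac_le_one (t : ℝ) : t - ((⌈t⌉ : ℝ) - 1) ≤ 1 := by
  have := Int.le_ceil t; linarith

lemma qRem_pos (γ : ℕ → ℝ) (n : ℕ) : 0 < qRem γ n := by
  cases n with
  | zero => have := frac_pos (γ 0); rw [qRem]; push_cast; linarith
  | succ n => have := frac_pos (γ (n+1) * qRem γ n); rw [qRem]; push_cast; linarith

lemma qRem_le_one (γ : ℕ → ℝ) (n : ℕ) : qRem γ n ≤ 1 := by
  cases n with
  | zero => have := frac_le_one (γ 0); rw [qRem]; push_cast; linarith
  | succ n => have := frac_le_one (γ (n+1) * qRem γ n); rw [qRem]; push_cast; linarith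

lemma toNat_cast (z : ℤ) (h : 0 ≤ z) : ((z.toNat : ℕ) : ℝ) = (z : ℝ) := by
  exact_mod_cast congrArg (Int.cast : ℤ → ℝ) (Int.toNat_of_nonneg h)

lemma qg0 (hγ : ∀ k, 1 < γ k) : (quasiGreedy γ 0 : ℝ) + qRem γ 0 = γ 0 := by
  have hpos : (0:ℝ) < γ 0 := lt_trans one_pos (hγ 0)
  have h1 : (1:ℤ) ≤ ⌈γ 0⌉ := Int.ceil_pos.2 hpos
  rw [quasiGreedy, qRem, toNat_cast _ (by omega)]
  push_cast; ring

lemma qgS (hγ : ∀ k, 1 < γ k) (n : ℕ) :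
    (quasiGreedy γ (n+1) : ℝ) + qRem γ (n+1) = γ (n+1) * qRem γ n := by
  have hpos : (0:ℝ) < γ (n+1) * qRem γ n :=
    mul_pos (lt_trans one_pos (hγ (n+1))) (qRem_pos γ n)
  have h1 : (1:ℤ) ≤ ⌈γ (n+1) * qRem γ n⌉ := Int.ceil_pos.2 hpos
  rw [quasiGreedy, qRem, toNat_cast _ (by omega)]
  push_cast; ring

lemma qsum (hγ : ∀ k, 1 < γ k) (L : ℕ) :
    (∑ k ∈ Finset.range (L+1), (quasiGreedy γ k : ℝ) / Dp γ 0 (k+1))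
      + qRem γ L / Dp γ 0 (L+1) = 1 := by
  induction L with
  | zero =>
      have hD : Dp γ 0 1 = γ 0 := by rw [Dp_succ, Dp_zero]; simp
      have hne : γ 0 ≠ 0 := by have := hγ 0; positivity
      rw [Finset.sum_range_one, hD, ← add_div, qg0 hγ, div_self hne]
  | succ L ih =>
      have hDS : Dp γ 0 (L+1+1) = Dp γ 0 (L+1) * γ (L+1) := by
        have := Dp_succ γ 0 (L+1); rw [Nat.zero_add] at this; exact this
      have hne1 : Dp γ 0 (L+1) ≠ 0 := (Dp_pos hγ 0 (L+1)).ne'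
      have hne2 : γ (L+1) ≠ 0 := by have := hγ (L+1); positivity
      have hkey : qRem γ L / Dp γ 0 (L+1)
          = (quasiGreedy γ (L+1) : ℝ) / Dp γ 0 (L+1+1) + qRem γ (L+1) / Dp γ 0 (L+1+1) := by
        rw [← add_div, qgS hγ, hDS]
        field_simp
      rw [Finset.sum_range_succ]
      linarith [ih, hkey]

/-- If `b` is not lexicographically smaller than the quasi-greedy expansion of 1,
then its value is at least 1. -/
lemma lexB (hγ : ∀ k, 1 < γ k) (hT : Tendsto (fun L => Dp γ 0 L) atTop atTop)
    (b : ℕ → ℕ) (hb : Summable fun k => (b k : ℝ) / Dp γ 0 (k+1))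
    (hlex : ¬ LexLt b (quasiGreedy γ)) :
    1 ≤ ∑' k, (b k : ℝ) / Dp γ 0 (k+1) := by
  have hps : ∀ L : ℕ, ∑ k ∈ Finset.range L, (b k : ℝ) / Dp γ 0 (k+1)
      ≤ ∑' k, (b k : ℝ) / Dp γ 0 (k+1) :=
    fun L => Summable.sum_le_tsum _ (fun k _ => div_nonneg (Nat.cast_nonneg _) (Dp_pos hγ 0 (k+1)).le) hb
  by_cases heq : b = quasiGreedy γ
  · subst heq
    have hT1 : Tendsto (fun L : ℕ => Dp γ 0 (L+1)) atTop atTop :=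
      (tendsto_add_atTop_iff_nat 1).2 hT
    have hlim : Tendsto (fun L : ℕ => 1 - 1 / Dp γ 0 (L+1)) atTop (nhds 1) := by
      have h0 : Tendsto (fun L : ℕ => 1 / Dp γ 0 (L+1)) atTop (nhds 0) := by
        simpa [one_div, Pi.inv_def] using hT1.inv_tendsto_atTop
      simpa using tendsto_const_nhds.sub h0
    refine le_of_tendsto' hlim fun L => ?_
    have hq := qsum hγ L
    have h1 : qRem γ L / Dp γ 0 (L+1) ≤ 1 / Dp γ 0 (L+1) :=
      div_le_div_of_nonneg_right (qRem_le_one γ L) (Dp_pos hγ 0 (L+1)).le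
    calc 1 - 1 / Dp γ 0 (L+1) ≤ 1 - qRem γ L / Dp γ 0 (L+1) := by linarith
      _ = ∑ k ∈ Finset.range (L+1), (quasiGreedy γ k : ℝ) / Dp γ 0 (k+1) := by linarith
      _ ≤ _ := hps (L+1)
  · have hne : ∃ k, b k ≠ quasiGreedy γ k := by
      by_contra h; push_neg at h; exact heq (funext h)
    set ℓ := Nat.find hne with hℓdef
    have hspec : b ℓ ≠ quasiGreedy γ ℓ := Nat.find_spec hne
    have hmin : ∀ k, k < ℓ → b k = quasiGreedy γ k := fun k hk =>
      not_not.1 (Nat.find_min hne hk)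
    have hgt : quasiGreedy γ ℓ < b ℓ := by
      rcases lt_or_gt_of_ne hspec with h | h
      · exact absurd ⟨ℓ, hmin, h⟩ hlex
      · exact h
    have hcast : (quasiGreedy γ ℓ : ℝ) + 1 ≤ (b ℓ : ℝ) := by exact_mod_cast hgt
    have hq := qsum hγ ℓ
    have hDpos := Dp_pos hγ 0 (ℓ+1)
    have hsum_eq : ∑ k ∈ Finset.range ℓ, (b k : ℝ) / Dp γ 0 (k+1)
        = ∑ k ∈ Finset.range ℓ, (quasiGreedy γ k : ℝ) / Dp γ 0 (k+1) :=
      Finset.sum_congr rfl fun k hk => by rw [hmin k (Finset.mem_range.1 hk)]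
    have h2 : ∑ k ∈ Finset.range (ℓ+1), (quasiGreedy γ k : ℝ) / Dp γ 0 (k+1)
        + 1 / Dp γ 0 (ℓ+1) ≤ ∑ k ∈ Finset.range (ℓ+1), (b k : ℝ) / Dp γ 0 (k+1) := by
      rw [Finset.sum_range_succ, Finset.sum_range_succ, hsum_eq]
      have : (quasiGreedy γ ℓ : ℝ) / Dp γ 0 (ℓ+1) + 1 / Dp γ 0 (ℓ+1) ≤ (b ℓ : ℝ) / Dp γ 0 (ℓ+1) := by
        rw [← add_div]
        exact div_le_div_of_nonneg_right hcast hDpos.le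
      linarith
    have h3 : qRem γ ℓ / Dp γ 0 (ℓ+1) ≤ 1 / Dp γ 0 (ℓ+1) :=
      div_le_div_of_nonneg_right (qRem_le_one γ ℓ) hDpos.le
    calc (1:ℝ) = ∑ k ∈ Finset.range (ℓ+1), (quasiGreedy γ k : ℝ) / Dp γ 0 (k+1)
          + qRem γ ℓ / Dp γ 0 (ℓ+1) := hq.symm
      _ ≤ ∑ k ∈ Finset.range (ℓ+1), (quasiGreedy γ k : ℝ) / Dp γ 0 (k+1)
          + 1 / Dp γ 0 (ℓ+1) := by linarith
      _ ≤ ∑ k ∈ Finset.range (ℓ+1), (b k : ℝ) / Dp γ 0 (k+1) := h2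
      _ ≤ _ := hps (ℓ+1)

end QG


section Main
variable {β : ℕ → ℝ} {a : ℕ → ℕ}

/-- Uniqueness: any bounded solution of the digit recursion equals the tail values. -/
lemma tv_unique (hβ : IsCantorBase β)
    (hsum : Summable (fun n => (a n : ℝ) / cprod β n))
    (s : ℕ → ℝ) (hbd : ∀ k, |s k| ≤ 1)
    (hrec : ∀ k, β k * s k = (a k : ℝ) + s (k+1)) (n : ℕ) :
    s n = tv β a n := by
  have h1 : ∀ L, s n - tv β a n = (s (n+L) - tv β a (n+L)) / Dp β n L := by
    intro L
    rw [finite_exp hβ.1 s hrec n L, tv_finite hβ.1 hsum n L, sub_div]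
    ring
  have hs0 : Tendsto (fun L => s (n+L) / Dp β n L) atTop (nhds 0) := by
    refine squeeze_zero_norm (fun L => ?_) (one_div_Dp_tendsto hβ n)
    rw [norm_div, Real.norm_eq_abs, Real.norm_eq_abs,
      abs_of_pos (Dp_pos hβ.1 n L)]
    exact div_le_div_of_nonneg_right (hbd (n+L)) (Dp_pos hβ.1 n L).le
  have ht0 := tv_tail_tendsto hβ.1 hsum n
  have : Tendsto (fun L => (s (n+L) - tv β a (n+L)) / Dp β n L) atTop (nhds 0) := by
    have := hs0.sub ht0
    simp only [sub_zero] at this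
    refine this.congr fun L => ?_
    rw [sub_div]
  have hconst : Tendsto (fun _ : ℕ => s n - tv β a n) atTop (nhds (s n - tv β a n)) :=
    tendsto_const_nhds
  have := tendsto_nhds_unique (hconst.congr fun L => h1 L) this
  linarith

lemma greedyRem_nonneg (hβ : ∀ k, 1 < β k) (x : ℝ) (hx : 0 ≤ x) (n : ℕ) :
    0 ≤ greedyRem β x n := by
  induction n with
  | zero =>
      rw [greedyRem]
      linarith [Int.floor_le (β 0 * x)]
  | succ n ih =>
      rw [greedyRem]
      linarith [Int.floor_le (β (n+1) * greedyRem β x n)]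

lemma greedyRem_lt_one (x : ℝ) (n : ℕ) : greedyRem β x n < 1 := by
  cases n with
  | zero => rw [greedyRem]; linarith [Int.sub_one_lt_floor (β 0 * x)]
  | succ n => rw [greedyRem]; linarith [Int.sub_one_lt_floor (β (n+1) * greedyRem β x n)]

/-- Forward: if `a` is the greedy expansion then all tail values from 1 on are `< 1`. -/
lemma greedy_tv_lt_one (hβ : IsCantorBase β) (x : ℝ) (hx : x ∈ Set.Icc (0:ℝ) 1)
    (hsum : Summable (fun n => ((greedy β x n : ℕ) : ℝ) / cprod β n)) (m : ℕ) (hm : 1 ≤ m) :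
    tv β (greedy β x) m < 1 := by
  set s : ℕ → ℝ := fun k => match k with
    | 0 => x
    | k+1 => greedyRem β x k with hs
  have hx0 := hx.1
  have hx1 := hx.2
  have hrnn : ∀ k, 0 ≤ greedyRem β x k := greedyRem_nonneg hβ.1 x hx0
  have hbd : ∀ k, |s k| ≤ 1 := by
    intro k
    cases k with
    | zero => rw [abs_le]; constructor <;> simp [hs] <;> linarith
    | succ k =>
        rw [abs_le]
        constructor
        · simp only [hs]; linarith [hrnn k]
        · simp only [hs]; linarith [greedyRem_lt_one (β := β) x k]
  have hfloor : ∀ t : ℝ, 0 ≤ t → ((((⌊t⌋).toNat : ℕ)) : ℝ) = (⌊t⌋ : ℝ) := by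
    intro t ht
    exact toNat_cast _ (Int.floor_nonneg.2 ht)
  have hrec : ∀ k, β k * s k = ((greedy β x k : ℕ) : ℝ) + s (k+1) := by
    intro k
    cases k with
    | zero =>
        show β 0 * x = ((greedy β x 0 : ℕ) : ℝ) + greedyRem β x 0
        rw [greedy, greedyRem,
          hfloor _ (mul_nonneg (le_of_lt (lt_trans one_pos (hβ.1 0))) hx0)]
        ring
    | succ k =>
        show β (k+1) * greedyRem β x k = ((greedy β x (k+1) : ℕ) : ℝ) + greedyRem β x (k+1)
        rw [greedy, greedyRem,
          hfloor _ (mul_nonneg (le_of_lt (lt_trans one_pos (hβ.1 (k+1)))) (hrnn k))]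
        ring
  have := tv_unique hβ hsum s hbd hrec m
  obtain ⟨k, rfl⟩ : ∃ k, m = k + 1 := ⟨m - 1, by omega⟩
  rw [← this]
  exact greedyRem_lt_one x k

/-- Converse final step: if all tail values from 1 on are `< 1` then `a` is greedy. -/
lemma tv_lt_one_greedy (hβ : IsCantorBase β) (x : ℝ) (hx : x ∈ Set.Icc (0:ℝ) 1)
    (hsum : Summable (fun n => (a n : ℝ) / cprod β n)) (hval : tv β a 0 = x)
    (hlt : ∀ m, 1 ≤ m → tv β a m < 1) : a = greedy β x := by
  have key : ∀ n, a n = greedy β x n ∧ greedyRem β x n = tv β a (n+1) := by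
    intro n
    induction n with
    | zero =>
        have hrec := tv_rec hβ.1 hsum 0
        rw [hval] at hrec
        have h0 : 0 ≤ tv β a 1 := tv_nonneg hβ.1 1
        have h1 : tv β a 1 < 1 := hlt 1 le_rfl
        have hfl : ⌊β 0 * x⌋ = (a 0 : ℤ) := by
          rw [Int.floor_eq_iff]
          constructor
          · push_cast; linarith
          · push_cast; linarith
        constructor
        · rw [greedy, hfl]; simp
        · rw [greedyRem, hfl]; push_cast; linarith
    | succ n ih =>
        have hrec := tv_rec hβ.1 hsum (n+1)
        rw [← ih.2] at hrec
        have h0 : 0 ≤ tv β a (n+2) := tv_nonneg hβ.1 (n+2)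
        have h1 : tv β a (n+2) < 1 := hlt (n+2) (by omega)
        have hfl : ⌊β (n+1) * greedyRem β x n⌋ = (a (n+1) : ℤ) := by
          rw [Int.floor_eq_iff]
          constructor
          · push_cast; linarith
          · push_cast; linarith
        constructor
        · rw [greedy, hfl]; simp
        · rw [greedyRem, hfl]; push_cast; linarith
  funext n
  exact (key n).1

end Main


section Chain
variable {β : ℕ → ℝ} {a : ℕ → ℕ}

/-- One step: if the `m`-th shift is lex-below the quasi-greedy expansion of the
shifted base, the tail value jumps forward with a contraction. -/
lemma step_ineq (hβ : IsCantorBase β)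
    (hsum : Summable (fun n => (a n : ℝ) / cprod β n)) (m : ℕ)
    (hlex : LexLt (shiftSeq a m) (quasiGreedy (shiftBase β m))) :
    ∃ p, tv β a m - 1
      ≤ (tv β a (m+p+1) - 1 - qRem (shiftBase β m) p) / Dp β m (p+1) := by
  obtain ⟨ℓ, hagree, hlt⟩ := hlex
  refine ⟨ℓ, ?_⟩
  set γ := shiftBase β m with hγdef
  have hγ1 : ∀ k, 1 < γ k := fun k => hβ.1 (m+k)
  have e1 := tv_finite hβ.1 hsum m (ℓ+1)
  have e2 := qsum hγ1 ℓ
  have hDγ : ∀ L, Dp γ 0 L = Dp β m L := Dp_sb β m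
  simp only [hDγ] at e2
  have hD := Dp_pos hβ.1 m (ℓ+1)
  have hsum_eq : ∑ k ∈ Finset.range ℓ, (a (m+k) : ℝ) / Dp β m (k+1)
      = ∑ k ∈ Finset.range ℓ, (quasiGreedy γ k : ℝ) / Dp β m (k+1) :=
    Finset.sum_congr rfl fun k hk => by
      rw [show a (m+k) = shiftSeq a m k from rfl, hagree k (Finset.mem_range.1 hk)]
  have hcast : (a (m+ℓ) : ℝ) ≤ (quasiGreedy γ ℓ : ℝ) - 1 := by
    have : (shiftSeq a m ℓ) + 1 ≤ quasiGreedy γ ℓ := hlt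
    have h2 : ((shiftSeq a m ℓ : ℕ) : ℝ) + 1 ≤ (quasiGreedy γ ℓ : ℝ) := by exact_mod_cast this
    have h3 : (shiftSeq a m ℓ : ℕ) = a (m+ℓ) := rfl
    rw [h3] at h2; linarith
  rw [Finset.sum_range_succ] at e1 e2
  rw [hsum_eq, show m+(ℓ+1) = m+ℓ+1 by omega] at e1
  have expand : tv β a m - 1 = ((a (m+ℓ) : ℝ) - (quasiGreedy γ ℓ : ℝ)
      + tv β a (m+ℓ+1) - qRem γ ℓ) / Dp β m (ℓ+1) := by
    rw [e1, ← e2]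
    ring
  rw [expand]
  apply div_le_div_of_nonneg_right _ hD.le
  linarith

/-- All tail values from position 1 on are at most 1. -/
lemma tv_le_one (hβ : IsCantorBase β)
    (hsum : Summable (fun n => (a n : ℝ) / cprod β n))
    (H : ∀ n, 1 ≤ n → LexLt (shiftSeq a n) (quasiGreedy (shiftBase β n)))
    (m : ℕ) (hm : 1 ≤ m) : tv β a m ≤ 1 := by
  have step : ∀ j, 1 ≤ j → ∃ p, tv β a j - 1
      ≤ (tv β a (j+p+1) - 1 - qRem (shiftBase β j) p) / Dp β j (p+1) :=
    fun j hj => step_ineq hβ hsum j (H j hj)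
  classical
  set nxt : ℕ → ℕ := fun j => if h : 1 ≤ j then j + (step j h).choose + 1 else j + 1 with hnxt
  have hnxt_gt : ∀ j, j + 1 ≤ nxt j := by
    intro j; simp only [hnxt]; split <;> omega
  set g : ℕ → ℕ := fun k => nxt^[k] m with hg
  have hg0 : g 0 = m := rfl
  have hgS : ∀ k, g (k+1) = nxt (g k) := fun k => Function.iterate_succ_apply' nxt k m
  have hg_ge : ∀ k, m + k ≤ g k := by
    intro k
    induction k with
    | zero => simp [hg0]
    | succ k ih => rw [hgS]; have := hnxt_gt (g k); omega
  have hg1 : ∀ k, 1 ≤ g k := fun k => le_trans (by omega) (hg_ge k)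
  -- the chain inequality
  have claim : ∀ k, tv β a m - 1 ≤ (tv β a (g k) - 1) / Dp β m (g k - m) := by
    intro k
    induction k with
    | zero => rw [hg0]; simp [Dp_zero]
    | succ k ih =>
        set p := (step (g k) (hg1 k)).choose with hp
        have hspec := (step (g k) (hg1 k)).choose_spec
        have hgk1 : g (k+1) = g k + p + 1 := by
          rw [hgS]; simp only [hnxt]; rw [dif_pos (hg1 k)]
        have hq := qRem_pos (shiftBase β (g k)) p
        have hD2 := Dp_pos hβ.1 (g k) (p+1)
        have h2 : tv β a (g k) - 1 ≤ (tv β a (g (k+1)) - 1) / Dp β (g k) (p+1) := by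
          rw [hgk1]
          calc tv β a (g k) - 1
              ≤ (tv β a (g k + p + 1) - 1 - qRem (shiftBase β (g k)) p) / Dp β (g k) (p+1) := hspec
            _ ≤ (tv β a (g k + p + 1) - 1) / Dp β (g k) (p+1) :=
                div_le_div_of_nonneg_right (by linarith) hD2.le
        have hD1 := Dp_pos hβ.1 m (g k - m)
        have h3 : (tv β a (g k) - 1) / Dp β m (g k - m)
            ≤ ((tv β a (g (k+1)) - 1) / Dp β (g k) (p+1)) / Dp β m (g k - m) :=
          div_le_div_of_nonneg_right h2 hD1.le
        have hmd : m + (g k - m) = g k := by have := hg_ge k; omega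
        have hDadd : Dp β m (g (k+1) - m) = Dp β m (g k - m) * Dp β (g k) (p+1) := by
          have h4 := Dp_add β m (g k - m) (p+1)
          rw [hmd] at h4
          rw [show g (k+1) - m = (g k - m) + (p+1) by omega]
          exact h4
        refine le_trans ih (le_trans h3 ?_)
        rw [div_div, mul_comm, ← hDadd]
  -- pass to the limit
  have hlim : Tendsto (fun j => tv β a (m+j) / Dp β m j - 1 / Dp β m j) atTop (nhds 0) := by
    have h1 := tv_tail_tendsto hβ.1 hsum m
    have h2 := one_div_Dp_tendsto hβ m
    simpa using h1.sub h2
  have hcomp : Tendsto (fun k => g k - m) atTop atTop :=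
    tendsto_atTop_mono (fun k => by simp only [id_eq]; have := hg_ge k; omega) tendsto_id
  have hfin : Tendsto (fun k => (tv β a (g k) - 1) / Dp β m (g k - m)) atTop (nhds 0) := by
    have := hlim.comp hcomp
    refine this.congr fun k => ?_
    show tv β a (m + (g k - m)) / Dp β m (g k - m) - 1 / Dp β m (g k - m)
      = (tv β a (g k) - 1) / Dp β m (g k - m)
    rw [show m + (g k - m) = g k by have := hg_ge k; omega, sub_div]
  have := ge_of_tendsto' hfin claim
  linarith

lemma tv_lt_one (hβ : IsCantorBase β)
    (hsum : Summable (fun n => (a n : ℝ) / cprod β n))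
    (H : ∀ n, 1 ≤ n → LexLt (shiftSeq a n) (quasiGreedy (shiftBase β n)))
    (m : ℕ) (hm : 1 ≤ m) : tv β a m < 1 := by
  obtain ⟨p, hp⟩ := step_ineq hβ hsum m (H m hm)
  have h1 : tv β a (m+p+1) ≤ 1 := tv_le_one hβ hsum H (m+p+1) (by omega)
  have hq := qRem_pos (shiftBase β m) p
  have hD := Dp_pos hβ.1 m (p+1)
  have h2 : (tv β a (m+p+1) - 1 - qRem (shiftBase β m) p) / Dp β m (p+1) < 0 :=
    div_neg_of_neg_of_pos (by linarith) hD
  linarith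

end Chain

end Aux14

theorem stmt_14 (β : ℕ → ℝ) (hβ : IsCantorBase β) (x : ℝ)
    (hx : x ∈ Set.Icc (0:ℝ) 1) (a : ℕ → ℕ)
    (hsum : Summable (fun n => (a n : ℝ) / cprod β n)) (hval : valN β a = x) :
    a = greedy β x ↔
      ∀ n : ℕ, 1 ≤ n → LexLt (shiftSeq a n) (quasiGreedy (shiftBase β n)) := by
  have htv0 : Aux14.tv β a 0 = x := by
    rw [← hval]
    refine tsum_congr fun k => ?_
    rw [Nat.zero_add, Aux14.cprod_eq]
  constructor
  · intro h n hn
    have hlt : Aux14.tv β a n < 1 := by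
      subst h
      exact Aux14.greedy_tv_lt_one hβ x hx hsum n hn
    by_contra hlex
    have hγ1 : ∀ k, 1 < shiftBase β n k := fun k => hβ.1 (n+k)
    have hT : Tendsto (fun L => Aux14.Dp (shiftBase β n) 0 L) atTop atTop := by
      refine (Aux14.Dp_tendsto hβ n).congr fun L => (Aux14.Dp_sb β n L).symm
    have hb : Summable (fun k => ((shiftSeq a n k : ℕ) : ℝ)
        / Aux14.Dp (shiftBase β n) 0 (k+1)) := by
      refine (Aux14.summable_tail hβ.1 hsum n).congr fun k => ?_
      rw [Aux14.Dp_sb]; rfl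
    have h1 := Aux14.lexB hγ1 hT (shiftSeq a n) hb hlex
    have h2 : ∑' k, ((shiftSeq a n k : ℕ) : ℝ) / Aux14.Dp (shiftBase β n) 0 (k+1)
        = Aux14.tv β a n := tsum_congr fun k => by rw [Aux14.Dp_sb]; rfl
    rw [h2] at h1
    linarith
  · intro H
    exact Aux14.tv_lt_one_greedy hβ x hx hsum htv0 (Aux14.tv_lt_one hβ hsum H)
end
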